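/- Asymptotic continuity of the freely measured relative entropy of entanglement: let AB be a bipartite system of minimum local dimension d=min{|A|,|B|}<∞, and let ρ,ω be states on AB with trace distance ε=(1/2)‖ρ−ω‖₁. Then for 𝒦∈{SEP,PPT} and any set 𝕂 of measurements, |D_𝒦^𝕂(ρ) − D_𝒦^𝕂(ω)| ≤ ε log₂ d + g(ε), where g(x)=(1+x)log₂(1+x) − x log₂ x. -/

import Mathlib

open scoped BigOperators Kronecker ENNReal Matrix ComplexOrder Classical
open Filter

noncomputable section

namespace QIT

/-! ## States, trace norm, partial traces -/

/-- A quantum state: a positive semidefinite, unit-trace operator. -/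
def IsState {n : Type} [Fintype n] (ρ : Matrix n n ℂ) : Prop :=
  ρ.PosSemidef ∧ ρ.trace = 1

/-- The trace norm `‖M‖₁ = Tr √(MᴴM)`. -/
def traceNorm {n : Type} [Fintype n] [DecidableEq n] (M : Matrix n n ℂ) : ℝ :=
  (((Matrix.posSemidef_conjTranspose_mul_self M).1.eigenvectorUnitary : Matrix n n ℂ) *
    Matrix.diagonal (fun i => ((Real.sqrt ((Matrix.posSemidef_conjTranspose_mul_self M).1.eigenvalues i) : ℝ) : ℂ)) *
    (star (Matrix.posSemidef_conjTranspose_mul_self M).1.eigenvectorUnitary : Matrix n n ℂ)).trace.re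

/-- Partial trace over the second tensor factor. -/
def ptraceRight {a b : Type} [Fintype b] (ρ : Matrix (a × b) (a × b) ℂ) :
    Matrix a a ℂ := fun i j => ∑ k, ρ (i, k) (j, k)

/-- Partial trace over the first tensor factor. -/
def ptraceLeft {a b : Type} [Fintype a] (ρ : Matrix (a × b) (a × b) ℂ) :
    Matrix b b ℂ := fun i j => ∑ k, ρ (k, i) (k, j)

/-- Partial transpose on the second factor. -/
def ptB {a b : Type} (ρ : Matrix (a × b) (a × b) ℂ) : Matrix (a × b) (a × b) ℂ :=
  fun p q => ρ (p.1, q.2) (q.1, p.2)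

/-- A state is PPT when its partial transpose is positive semidefinite. -/
def IsPPT {a b : Type} [Fintype a] [Fintype b] (ρ : Matrix (a × b) (a × b) ℂ) : Prop :=
  (ptB ρ).PosSemidef

/-- Membership in the separable cone: a finite sum of Kronecker products of PSD operators. -/
def InSepCone {a b : Type} [Fintype a] [Fintype b] (M : Matrix (a × b) (a × b) ℂ) : Prop :=
  ∃ (k : ℕ) (x : Fin k → Matrix a a ℂ) (y : Fin k → Matrix b b ℂ),
    (∀ i, (x i).PosSemidef) ∧ (∀ i, (y i).PosSemidef) ∧ M = ∑ i, x i ⊗ₖ y i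

/-- Membership in the PPT cone. -/
def InPPTCone {a b : Type} [Fintype a] [Fintype b] (M : Matrix (a × b) (a × b) ℂ) : Prop :=
  M.PosSemidef ∧ (ptB M).PosSemidef

/-- `n`-fold tensor power of a bipartite operator, with all `A` factors grouped together
and all `B` factors grouped together (the `Aⁿ : Bⁿ` cut). -/
def bpow {a b : Type} [Fintype a] [Fintype b] (ρ : Matrix (a × b) (a × b) ℂ) (n : ℕ) :
    Matrix ((Fin n → a) × (Fin n → b)) ((Fin n → a) × (Fin n → b)) ℂ :=
  fun p q => ∏ i, ρ (p.1 i, p.2 i) (q.1 i, q.2 i)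

/-- The maximally entangled state `Φ_d` of local dimension `d`. -/
def phi (d : ℕ) : Matrix (Fin d × Fin d) (Fin d × Fin d) ℂ :=
  fun p q => if p.1 = p.2 ∧ q.1 = q.2 then ((d : ℂ))⁻¹ else 0

/-! ## Channels -/

/-- A quantum channel (CPTP map), via the Choi–Kraus representation. -/
def IsCPTP {m n : Type} [Fintype m] [DecidableEq m] [Fintype n]
    (Λ : Matrix m m ℂ → Matrix n n ℂ) : Prop :=
  ∃ (k : ℕ) (K : Fin k → Matrix n m ℂ),
    (∑ i, (K i)ᴴ * K i = 1) ∧ ∀ ρ, Λ ρ = ∑ i, K i * ρ * (K i)ᴴ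

/-- LOCC channels between bipartite systems: finite compositions of one-way rounds, in which
one party applies a (fine-grained) quantum instrument, communicates the classical outcome,
and the other party applies a channel depending on the outcome. -/
inductive IsLOCC :
    ∀ (a b a' b' : Type) [Fintype a] [DecidableEq a] [Fintype b] [DecidableEq b]
      [Fintype a'] [DecidableEq a'] [Fintype b'] [DecidableEq b'],
      (Matrix (a × b) (a × b) ℂ → Matrix (a' × b') (a' × b') ℂ) → Prop
  | oneWayA {a b a' b' : Type} [Fintype a] [DecidableEq a] [Fintype b] [DecidableEq b]
      [Fintype a'] [DecidableEq a'] [Fintype b'] [DecidableEq b']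
      (k l : ℕ) (KA : Fin k → Matrix a' a ℂ) (KB : Fin k → Fin l → Matrix b' b ℂ)
      (hA : ∑ i, (KA i)ᴴ * KA i = 1) (hB : ∀ i, ∑ j, (KB i j)ᴴ * KB i j = 1) :
      IsLOCC a b a' b' (fun ρ => ∑ i, ∑ j, (KA i ⊗ₖ KB i j) * ρ * (KA i ⊗ₖ KB i j)ᴴ)
  | oneWayB {a b a' b' : Type} [Fintype a] [DecidableEq a] [Fintype b] [DecidableEq b]
      [Fintype a'] [DecidableEq a'] [Fintype b'] [DecidableEq b']
      (k l : ℕ) (KB : Fin k → Matrix b' b ℂ) (KA : Fin k → Fin l → Matrix a' a ℂ)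
      (hB : ∑ i, (KB i)ᴴ * KB i = 1) (hA : ∀ i, ∑ j, (KA i j)ᴴ * KA i j = 1) :
      IsLOCC a b a' b' (fun ρ => ∑ i, ∑ j, (KA i j ⊗ₖ KB i) * ρ * (KA i j ⊗ₖ KB i)ᴴ)
  | comp {a b a₁ b₁ a' b' : Type} [Fintype a] [DecidableEq a] [Fintype b] [DecidableEq b]
      [Fintype a₁] [DecidableEq a₁] [Fintype b₁] [DecidableEq b₁]
      [Fintype a'] [DecidableEq a'] [Fintype b'] [DecidableEq b']
      {Λ₁ : Matrix (a × b) (a × b) ℂ → Matrix (a₁ × b₁) (a₁ × b₁) ℂ}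
      {Λ₂ : Matrix (a₁ × b₁) (a₁ × b₁) ℂ → Matrix (a' × b') (a' × b') ℂ} :
      IsLOCC a b a₁ b₁ Λ₁ → IsLOCC a₁ b₁ a' b' Λ₂ → IsLOCC a b a' b' (fun ρ => Λ₂ (Λ₁ ρ))

/-! ## Catalysts: regrouping of tensor factors -/

/-- The regrouping `(A×B)×(C×D) ≃ (A×C)×(B×D)`. -/
def sysCat (a b c d : Type) : ((a × b) × c × d) ≃ ((a × c) × b × d) :=
  Equiv.prodProdProdComm a b c d

/-- `ρ_AB ⊗ τ_CD`, regrouped so that the bipartition is `AC : BD`. -/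
def catIn {a b c d : Type} (ρ : Matrix (a × b) (a × b) ℂ) (τ : Matrix (c × d) (c × d) ℂ) :
    Matrix ((a × c) × b × d) ((a × c) × b × d) ℂ :=
  Matrix.reindex (sysCat a b c d) (sysCat a b c d) (ρ ⊗ₖ τ)

/-- Reduced state of a system+catalyst state on `(A'C)(B'D)` on the main system `A'B'`. -/
def sysOut {a c b d : Type} [Fintype c] [Fintype d]
    (X : Matrix ((a × c) × b × d) ((a × c) × b × d) ℂ) : Matrix (a × b) (a × b) ℂ :=
  ptraceRight (Matrix.reindex (sysCat a c b d) (sysCat a c b d) X)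

/-- Reduced state of a system+catalyst state on `(A'C)(B'D)` on the catalyst `CD`. -/
def catOut {a c b d : Type} [Fintype a] [Fintype b]
    (X : Matrix ((a × c) × b × d) ((a × c) × b × d) ℂ) : Matrix (c × d) (c × d) ℂ :=
  ptraceLeft (Matrix.reindex (sysCat a c b d) (sysCat a c b d) X)

/-- Tensor product `⨂ⱼ τ_{CⱼDⱼ}` of a finite family of bipartite states,
grouped as `(C₁⋯C_k) : (D₁⋯D_k)`. -/
def piKron {k : ℕ} (c d : Fin k → ℕ)
    (τ : ∀ j, Matrix (Fin (c j) × Fin (d j)) (Fin (c j) × Fin (d j)) ℂ) :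
    Matrix ((∀ j, Fin (c j)) × ∀ j, Fin (d j)) ((∀ j, Fin (c j)) × ∀ j, Fin (d j)) ℂ :=
  fun p q => ∏ j, τ j (p.1 j, p.2 j) (q.1 j, q.2 j)

/-- The marginal of a multipartite catalyst state on the pair `CⱼDⱼ`. -/
def catMarginal {k : ℕ} {c d : Fin k → ℕ} (j : Fin k)
    (X : Matrix ((∀ i, Fin (c i)) × ∀ i, Fin (d i)) ((∀ i, Fin (c i)) × ∀ i, Fin (d i)) ℂ) :
    Matrix (Fin (c j) × Fin (d j)) (Fin (c j) × Fin (d j)) ℂ :=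
  ptraceRight (Matrix.reindex
    ((Equiv.prodCongr (Equiv.piSplitAt j fun i => Fin (c i)) (Equiv.piSplitAt j fun i => Fin (d i))).trans
      (Equiv.prodProdProdComm _ _ _ _))
    ((Equiv.prodCongr (Equiv.piSplitAt j fun i => Fin (c i)) (Equiv.piSplitAt j fun i => Fin (d i))).trans
      (Equiv.prodProdProdComm _ _ _ _)) X)

/-! ## Classes of operations and catalytic transformations -/

/-- A class of free operations of bipartite entanglement theory: for each choice of
input/output systems, a predicate on maps between the corresponding matrix spaces. -/
abbrev OpClass : Type 1 :=
  ∀ (a b a' b' : Type) [Fintype a] [DecidableEq a] [Fintype b] [DecidableEq b]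
    [Fintype a'] [DecidableEq a'] [Fintype b'] [DecidableEq b'],
    (Matrix (a × b) (a × b) ℂ → Matrix (a' × b') (a' × b') ℂ) → Prop

/-- LOCC operations, as an `OpClass`. -/
def LOCCClass : OpClass := IsLOCC

/-- PPT-preserving operations: channels mapping PPT states to PPT states. -/
def PPTPClass (a b a' b' : Type) [Fintype a] [DecidableEq a] [Fintype b] [DecidableEq b]
    [Fintype a'] [DecidableEq a'] [Fintype b'] [DecidableEq b']
    (Λ : Matrix (a × b) (a × b) ℂ → Matrix (a' × b') (a' × b') ℂ) : Prop :=
  IsCPTP Λ ∧ ∀ σ, IsState σ → IsPPT σ → IsPPT (Λ σ)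

/-- Non-entangling (separability-preserving) operations. -/
def NEClass (a b a' b' : Type) [Fintype a] [DecidableEq a] [Fintype b] [DecidableEq b]
    [Fintype a'] [DecidableEq a'] [Fintype b'] [DecidableEq b']
    (Λ : Matrix (a × b) (a × b) ℂ → Matrix (a' × b') (a' × b') ℂ) : Prop :=
  IsCPTP Λ ∧ ∀ σ, IsState σ → InSepCone σ → InSepCone (Λ σ)

/-- The various kinds of catalytic assistance. -/
inductive CatKind
  | plain  -- no catalyst
  | c      -- catalyst
  | cc     -- correlated catalyst
  | mc     -- marginal catalysts
  | mcc    -- marginal correlated catalysts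

/-- `Transform F T ρ ω`: the state `ρ` can be transformed into `ω` by operations in the
class `F` assisted by catalysts of kind `T`. -/
def Transform (F : OpClass) (T : CatKind) {a b a' b' : Type}
    [Fintype a] [DecidableEq a] [Fintype b] [DecidableEq b]
    [Fintype a'] [DecidableEq a'] [Fintype b'] [DecidableEq b']
    (ρ : Matrix (a × b) (a × b) ℂ) (ω : Matrix (a' × b') (a' × b') ℂ) : Prop :=
  match T with
  | .plain => ∃ Λ, F a b a' b' Λ ∧ Λ ρ = ω
  | .c => ∃ (dc dd : ℕ) (τ : Matrix (Fin dc × Fin dd) (Fin dc × Fin dd) ℂ)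
        (Λ : Matrix ((a × Fin dc) × b × Fin dd) ((a × Fin dc) × b × Fin dd) ℂ →
             Matrix ((a' × Fin dc) × b' × Fin dd) ((a' × Fin dc) × b' × Fin dd) ℂ),
      IsState τ ∧ F (a × Fin dc) (b × Fin dd) (a' × Fin dc) (b' × Fin dd) Λ ∧
      Λ (catIn ρ τ) = catIn ω τ
  | .cc => ∃ (dc dd : ℕ) (τ : Matrix (Fin dc × Fin dd) (Fin dc × Fin dd) ℂ)
        (Λ : Matrix ((a × Fin dc) × b × Fin dd) ((a × Fin dc) × b × Fin dd) ℂ →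
             Matrix ((a' × Fin dc) × b' × Fin dd) ((a' × Fin dc) × b' × Fin dd) ℂ),
      IsState τ ∧ F (a × Fin dc) (b × Fin dd) (a' × Fin dc) (b' × Fin dd) Λ ∧
      sysOut (Λ (catIn ρ τ)) = ω ∧ catOut (Λ (catIn ρ τ)) = τ
  | .mc => ∃ (k : ℕ) (c d : Fin k → ℕ)
        (τs : ∀ j, Matrix (Fin (c j) × Fin (d j)) (Fin (c j) × Fin (d j)) ℂ)
        (Λ : Matrix ((a × ∀ j, Fin (c j)) × b × ∀ j, Fin (d j))
               ((a × ∀ j, Fin (c j)) × b × ∀ j, Fin (d j)) ℂ →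
             Matrix ((a' × ∀ j, Fin (c j)) × b' × ∀ j, Fin (d j))
               ((a' × ∀ j, Fin (c j)) × b' × ∀ j, Fin (d j)) ℂ)
        (τ' : Matrix ((∀ j, Fin (c j)) × ∀ j, Fin (d j)) ((∀ j, Fin (c j)) × ∀ j, Fin (d j)) ℂ),
      (∀ j, IsState (τs j)) ∧
      F (a × ∀ j, Fin (c j)) (b × ∀ j, Fin (d j)) (a' × ∀ j, Fin (c j)) (b' × ∀ j, Fin (d j)) Λ ∧
      Λ (catIn ρ (piKron c d τs)) = catIn ω τ' ∧ ∀ j, catMarginal j τ' = τs j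
  | .mcc => ∃ (k : ℕ) (c d : Fin k → ℕ)
        (τs : ∀ j, Matrix (Fin (c j) × Fin (d j)) (Fin (c j) × Fin (d j)) ℂ)
        (Λ : Matrix ((a × ∀ j, Fin (c j)) × b × ∀ j, Fin (d j))
               ((a × ∀ j, Fin (c j)) × b × ∀ j, Fin (d j)) ℂ →
             Matrix ((a' × ∀ j, Fin (c j)) × b' × ∀ j, Fin (d j))
               ((a' × ∀ j, Fin (c j)) × b' × ∀ j, Fin (d j)) ℂ),
      (∀ j, IsState (τs j)) ∧
      F (a × ∀ j, Fin (c j)) (b × ∀ j, Fin (d j)) (a' × ∀ j, Fin (c j)) (b' × ∀ j, Fin (d j)) Λ ∧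
      sysOut (Λ (catIn ρ (piKron c d τs))) = ω ∧
      ∀ j, catMarginal j (catOut (Λ (catIn ρ (piKron c d τs)))) = τs j

/-! ## Asymptotic rates: distillable entanglement and entanglement cost -/

/-- Achievable rates for distillation of maximally entangled two-qubit states from `ρ`. -/
def distRates (F : OpClass) (T : CatKind) {a b : Type}
    [Fintype a] [DecidableEq a] [Fintype b] [DecidableEq b]
    (ρ : Matrix (a × b) (a × b) ℂ) : Set ℝ :=
  {R | 0 ≤ R ∧ ∃ ε : ℕ → ℝ, Tendsto ε atTop (nhds 0) ∧
    ∀ n : ℕ, ∃ ω' : Matrix ((Fin ⌈R * n⌉₊ → Fin 2) × (Fin ⌈R * n⌉₊ → Fin 2))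
        ((Fin ⌈R * n⌉₊ → Fin 2) × (Fin ⌈R * n⌉₊ → Fin 2)) ℂ,
      IsState ω' ∧ Transform F T (bpow ρ n) ω' ∧
      traceNorm (ω' - bpow (phi 2) ⌈R * n⌉₊) / 2 ≤ ε n}

/-- Distillable entanglement `E_{d,F̃}(ρ) = R_F̃(ρ → Φ₂)`. -/
def Ed (F : OpClass) (T : CatKind) {a b : Type}
    [Fintype a] [DecidableEq a] [Fintype b] [DecidableEq b]
    (ρ : Matrix (a × b) (a × b) ℂ) : ℝ≥0∞ :=
  ⨆ R ∈ distRates F T ρ, ENNReal.ofReal R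

/-- Achievable rates for dilution, i.e. for the transformation `Φ₂ → ρ`. -/
def dilRates (F : OpClass) (T : CatKind) {a b : Type}
    [Fintype a] [DecidableEq a] [Fintype b] [DecidableEq b]
    (ρ : Matrix (a × b) (a × b) ℂ) : Set ℝ :=
  {R | 0 ≤ R ∧ ∃ ε : ℕ → ℝ, Tendsto ε atTop (nhds 0) ∧
    ∀ n : ℕ, ∃ ω' : Matrix ((Fin ⌈R * n⌉₊ → a) × (Fin ⌈R * n⌉₊ → b))
        ((Fin ⌈R * n⌉₊ → a) × (Fin ⌈R * n⌉₊ → b)) ℂ,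
      IsState ω' ∧ Transform F T (bpow (phi 2) n) ω' ∧
      traceNorm (ω' - bpow ρ ⌈R * n⌉₊) / 2 ≤ ε n}

/-- Entanglement cost `E_{c,F̃}(ρ) = 1 / R_F̃(Φ₂ → ρ)`. -/
def Ec (F : OpClass) (T : CatKind) {a b : Type}
    [Fintype a] [DecidableEq a] [Fintype b] [DecidableEq b]
    (ρ : Matrix (a × b) (a × b) ℂ) : ℝ≥0∞ :=
  (⨆ R ∈ dilRates F T ρ, ENNReal.ofReal R)⁻¹

/-! ## Entropic quantities -/

/-- Matrix logarithm (base 2) of a Hermitian matrix, via the spectral decomposition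
(with the convention `log 0 = 0` on the kernel); junk value `0` on non-Hermitian inputs. -/
def matLog {n : Type} [Fintype n] [DecidableEq n] (M : Matrix n n ℂ) : Matrix n n ℂ :=
  if hM : M.IsHermitian then
    (hM.eigenvectorUnitary : Matrix n n ℂ) *
      Matrix.diagonal (fun i => (Real.logb 2 (hM.eigenvalues i) : ℂ)) *
      (hM.eigenvectorUnitary : Matrix n n ℂ)ᴴ
  else 0

/-- The Umegaki relative entropy `D(ρ‖σ) = Tr ρ (log₂ ρ − log₂ σ)`, equal to `∞` when
the support of `ρ` is not contained in the support of `σ`. -/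
def relEnt {n : Type} [Fintype n] [DecidableEq n] (ρ σ : Matrix n n ℂ) : ℝ≥0∞ :=
  if ∀ v : n → ℂ, σ.mulVec v = 0 → ρ.mulVec v = 0 then
    ENNReal.ofReal ((ρ * (matLog ρ - matLog σ)).trace.re)
  else ⊤

/-- Kullback–Leibler divergence of finitely supported distributions (base 2). -/
def klDiv {ι : Type} [Fintype ι] (p q : ι → ℝ) : ℝ≥0∞ :=
  if ∀ i, q i = 0 → p i = 0 then
    ENNReal.ofReal (∑ i, p i * Real.logb 2 (p i / q i))
  else ⊤

/-- Von Neumann entropy `S(ρ) = −Tr ρ log₂ ρ`. -/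
def vnEnt {n : Type} [Fintype n] [DecidableEq n] (ρ : Matrix n n ℂ) : ℝ :=
  -(ρ * matLog ρ).trace.re

/-! ## Relative entropies of entanglement -/

/-- The two cones of free states. -/
inductive ConeKind | sep | ppt

/-- Membership in the cone specified by `κ`. -/
def inCone (κ : ConeKind) {a b : Type} [Fintype a] [Fintype b]
    (M : Matrix (a × b) (a × b) ℂ) : Prop :=
  match κ with
  | .sep => InSepCone M
  | .ppt => InPPTCone M

/-- The relative entropy of entanglement w.r.t. the cone `κ`:
`D_𝒦(ρ) = inf_{σ ∈ 𝒦¹} D(ρ‖σ)`. -/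
def DRel (κ : ConeKind) {a b : Type} [Fintype a] [DecidableEq a] [Fintype b] [DecidableEq b]
    (ρ : Matrix (a × b) (a × b) ℂ) : ℝ≥0∞ :=
  ⨅ (σ : Matrix (a × b) (a × b) ℂ) (_ : IsState σ) (_ : inCone κ σ), relEnt ρ σ

/-- Regularized relative entropy of entanglement; by tensor subadditivity of `D_𝒦` and
Fekete's lemma, the limit `lim_n (1/n) D_𝒦(ρ^{⊗n})` exists and equals the infimum. -/
def DRelReg (κ : ConeKind) {a b : Type} [Fintype a] [DecidableEq a] [Fintype b] [DecidableEq b]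
    (ρ : Matrix (a × b) (a × b) ℂ) : ℝ≥0∞ :=
  ⨅ (n : ℕ) (_ : 0 < n), ((n : ℝ≥0∞))⁻¹ * DRel κ (bpow ρ n)

/-- A POVM: finitely many PSD effects summing to the identity. -/
def IsPOVM {n : Type} [Fintype n] [DecidableEq n] {k : ℕ} (E : Fin k → Matrix n n ℂ) : Prop :=
  (∀ i, (E i).PosSemidef) ∧ ∑ i, E i = 1

/-- A POVM is LOCC-implementable if the associated measure-and-record-on-both-sides channel
is an LOCC channel. -/
def IsLOCCMeasurement {a b : Type} [Fintype a] [DecidableEq a] [Fintype b] [DecidableEq b]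
    {k : ℕ} (E : Fin k → Matrix (a × b) (a × b) ℂ) : Prop :=
  ∃ Λ : Matrix (a × b) (a × b) ℂ → Matrix (Fin k × Fin k) (Fin k × Fin k) ℂ,
    IsLOCC a b (Fin k) (Fin k) Λ ∧
    ∀ ρ, Λ ρ = Matrix.diagonal fun p => if p.1 = p.2 then ((E p.1) * ρ).trace else 0

/-- The three classes of bipartite measurements. -/
inductive MeasKind | locc | sep | ppt

/-- The defining condition for membership of a POVM in the class `μ`. -/
def measExtra (μ : MeasKind) {a b : Type} [Fintype a] [DecidableEq a] [Fintype b] [DecidableEq b]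
    {k : ℕ} (E : Fin k → Matrix (a × b) (a × b) ℂ) : Prop :=
  match μ with
  | .locc => IsLOCCMeasurement E
  | .sep => ∀ i, InSepCone (E i)
  | .ppt => ∀ i, InPPTCone (E i)

/-- The measured relative entropy of entanglement w.r.t. the cone `κ` and an arbitrary
collection `Meas` of measurements:
`D_𝒦^𝕂(ρ) = inf_{σ ∈ 𝒦¹} sup_{(E_i) ∈ 𝕂} D((Tr E_i ρ)_i ‖ (Tr E_i σ)_i)`. -/
def DMeasGen (κ : ConeKind) {a b : Type} [Fintype a] [DecidableEq a] [Fintype b] [DecidableEq b]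
    (Meas : ∀ k : ℕ, (Fin k → Matrix (a × b) (a × b) ℂ) → Prop)
    (ρ : Matrix (a × b) (a × b) ℂ) : ℝ≥0∞ :=
  ⨅ (σ : Matrix (a × b) (a × b) ℂ) (_ : IsState σ) (_ : inCone κ σ),
    ⨆ (k : ℕ) (E : Fin k → Matrix (a × b) (a × b) ℂ) (_ : IsPOVM E) (_ : Meas k E),
      klDiv (fun i => ((E i) * ρ).trace.re) (fun i => ((E i) * σ).trace.re)

/-- The `𝕂`-measured relative entropy of entanglement for `𝕂 ∈ {𝕃𝕆ℂℂ, 𝕊𝔼ℙ, ℙℙ𝕋}`. -/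
def DMeas (κ : ConeKind) (μ : MeasKind) {a b : Type}
    [Fintype a] [DecidableEq a] [Fintype b] [DecidableEq b]
    (ρ : Matrix (a × b) (a × b) ℂ) : ℝ≥0∞ :=
  DMeasGen κ (fun _k E => measExtra μ E) ρ

/-- Regularized measured relative entropy of entanglement; by (strong) superadditivity and
Fekete's lemma, the limit `lim_n (1/n) D_𝒦^𝕂(ρ^{⊗n})` exists and equals the supremum. -/
def DMeasReg (κ : ConeKind) (μ : MeasKind) {a b : Type}
    [Fintype a] [DecidableEq a] [Fintype b] [DecidableEq b]
    (ρ : Matrix (a × b) (a × b) ℂ) : ℝ≥0∞ :=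
  ⨆ (n : ℕ) (_ : 0 < n), ((n : ℝ≥0∞))⁻¹ * DMeas κ μ (bpow ρ n)

/-! ## Reductions of four-partite states -/

/-- Reduction of a state on `(A A') : (B B')` to `A : B`. -/
def redAB {a a' b b' : Type} [Fintype a'] [Fintype b']
    (ρ : Matrix ((a × a') × b × b') ((a × a') × b × b') ℂ) : Matrix (a × b) (a × b) ℂ :=
  fun p q => ∑ u, ∑ v, ρ ((p.1, u), (p.2, v)) ((q.1, u), (q.2, v))

/-- Reduction of a state on `(A A') : (B B')` to `A' : B'`. -/
def redA'B' {a a' b b' : Type} [Fintype a] [Fintype b]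
    (ρ : Matrix ((a × a') × b × b') ((a × a') × b × b') ℂ) : Matrix (a' × b') (a' × b') ℂ :=
  fun p q => ∑ i, ∑ j, ρ ((i, p.1), (j, p.2)) ((i, q.1), (j, q.2))

end QIT

namespace QIT

/-- The function `g(x) = (1+x)log₂(1+x) − x log₂ x`. -/
def gAFW (x : ℝ) : ℝ := (1 + x) * Real.logb 2 (1 + x) - x * Real.logb 2 x



lemma one_sub_inv_le_log {x : ℝ} (hx : 0 < x) : 1 - x⁻¹ ≤ Real.log x := by
  have h := Real.log_le_sub_one_of_pos (inv_pos.mpr hx)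
  rw [Real.log_inv] at h
  linarith

lemma mul_log_superadd {x y : ℝ} (hx : 0 ≤ x) (hy : 0 ≤ y) :
    x * Real.log x + y * Real.log y ≤ (x + y) * Real.log (x + y) := by
  rcases eq_or_lt_of_le hx with h | hx'
  · simp [← h]
  rcases eq_or_lt_of_le hy with h | hy'
  · simp [← h]
  have h1 : x * Real.log x ≤ x * Real.log (x + y) :=
    mul_le_mul_of_nonneg_left (Real.log_le_log hx' (by linarith)) hx
  have h2 : y * Real.log y ≤ y * Real.log (x + y) :=
    mul_le_mul_of_nonneg_left (Real.log_le_log hy' (by linarith)) hy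
  nlinarith [h1, h2]

lemma logsum2 {a b c e : ℝ} (ha : 0 ≤ a) (hb : 0 ≤ b) (hc : 0 ≤ c) (he : 0 ≤ e)
    (h1 : b = 0 → a = 0) (h2 : e = 0 → c = 0) :
    (a + c) * Real.log ((a + c) / (b + e)) ≤ a * Real.log (a / b) + c * Real.log (c / e) := by
  rcases eq_or_lt_of_le ha with h | ha'
  · rw [← h]
    simp only [zero_add, zero_mul]
    rcases eq_or_lt_of_le hc with h' | hc'
    · simp [← h']
    have he' : 0 < e := lt_of_le_of_ne he (fun h'' => by
      rw [h2 h''.symm] at hc'; exact lt_irrefl 0 hc')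
    have hle : c / (b + e) ≤ c / e :=
      div_le_div_of_nonneg_left hc (by linarith) (by linarith)
    have hpos : 0 < c / (b + e) := div_pos hc' (by linarith)
    exact mul_le_mul_of_nonneg_left (Real.log_le_log hpos hle) hc
  rcases eq_or_lt_of_le hc with h | hc'
  · rw [← h]
    simp only [add_zero, zero_mul]
    have hb' : 0 < b := lt_of_le_of_ne hb (fun h'' => by
      rw [h1 h''.symm] at ha'; exact lt_irrefl 0 ha')
    have hle : a / (b + e) ≤ a / b :=
      div_le_div_of_nonneg_left ha (by linarith) (by linarith)
    have hpos : 0 < a / (b + e) := div_pos ha' (by linarith)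
    exact mul_le_mul_of_nonneg_left (Real.log_le_log hpos hle) ha
  · -- both positive
    have hb' : 0 < b := lt_of_le_of_ne hb (fun h'' => by
      rw [h1 h''.symm] at ha'; exact lt_irrefl 0 ha')
    have he' : 0 < e := lt_of_le_of_ne he (fun h'' => by
      rw [h2 h''.symm] at hc'; exact lt_irrefl 0 hc')
    set X : ℝ := (a * (b + e)) / (b * (a + c)) with hX
    set Y : ℝ := (c * (b + e)) / (e * (a + c)) with hY
    have hXpos : 0 < X := by positivity
    have hYpos : 0 < Y := by positivity
    have hac : 0 < a + c := by linarith
    have hbe : 0 < b + e := by linarith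
    have la : Real.log (a / b) = Real.log X + Real.log ((a + c) / (b + e)) := by
      rw [← Real.log_mul (ne_of_gt hXpos) (by positivity)]
      congr 1
      rw [hX, div_mul_div_comm, div_eq_div_iff (by positivity) (by positivity)]
      ring
    have lc : Real.log (c / e) = Real.log Y + Real.log ((a + c) / (b + e)) := by
      rw [← Real.log_mul (ne_of_gt hYpos) (by positivity)]
      congr 1
      rw [hY, div_mul_div_comm, div_eq_div_iff (by positivity) (by positivity)]
      ring
    have bX : 1 - X⁻¹ ≤ Real.log X := one_sub_inv_le_log hXpos
    have bY : 1 - Y⁻¹ ≤ Real.log Y := one_sub_inv_le_log hYpos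
    have hXinv : a * X⁻¹ = b * (a + c) / (b + e) := by
      rw [hX]; field_simp
    have hYinv : c * Y⁻¹ = e * (a + c) / (b + e) := by
      rw [hY]; field_simp
    have key : 0 ≤ a * Real.log X + c * Real.log Y := by
      have h1' : a * (1 - X⁻¹) ≤ a * Real.log X := mul_le_mul_of_nonneg_left bX ha'.le
      have h2' : c * (1 - Y⁻¹) ≤ c * Real.log Y := mul_le_mul_of_nonneg_left bY hc'.le
      have : a * (1 - X⁻¹) + c * (1 - Y⁻¹) = 0 := by
        have : a * X⁻¹ + c * Y⁻¹ = a + c := by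
          rw [hXinv, hYinv]; field_simp
        nlinarith [this]
      linarith
    rw [la, lc]
    nlinarith [key]

lemma sum_logsum {ι : Type*} (u : Finset ι) (f g : ι → ℝ)
    (hf : ∀ i ∈ u, 0 ≤ f i) (hg : ∀ i ∈ u, 0 ≤ g i) (h : ∀ i ∈ u, g i = 0 → f i = 0) :
    (∑ i ∈ u, f i) * Real.log ((∑ i ∈ u, f i) / (∑ i ∈ u, g i)) ≤
      ∑ i ∈ u, f i * Real.log (f i / g i) := by
  induction u using Finset.cons_induction with
  | empty => simp
  | cons a s has ih =>
    rw [Finset.sum_cons, Finset.sum_cons, Finset.sum_cons]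
    have hf' : ∀ i ∈ s, 0 ≤ f i := fun i hi => hf i (Finset.mem_cons_of_mem hi)
    have hg' : ∀ i ∈ s, 0 ≤ g i := fun i hi => hg i (Finset.mem_cons_of_mem hi)
    have h' : ∀ i ∈ s, g i = 0 → f i = 0 := fun i hi => h i (Finset.mem_cons_of_mem hi)
    have hfa : 0 ≤ f a := hf a (Finset.mem_cons_self a s)
    have hga : 0 ≤ g a := hg a (Finset.mem_cons_self a s)
    have hfs : 0 ≤ ∑ i ∈ s, f i := Finset.sum_nonneg hf'
    have hgs : 0 ≤ ∑ i ∈ s, g i := Finset.sum_nonneg hg'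
    have hcond : (∑ i ∈ s, g i) = 0 → (∑ i ∈ s, f i) = 0 := by
      intro hz
      apply Finset.sum_eq_zero
      intro i hi
      exact h' i hi ((Finset.sum_eq_zero_iff_of_nonneg hg').mp hz i hi)
    calc (f a + ∑ i ∈ s, f i) * Real.log ((f a + ∑ i ∈ s, f i) / (g a + ∑ i ∈ s, g i))
        ≤ f a * Real.log (f a / g a) +
          (∑ i ∈ s, f i) * Real.log ((∑ i ∈ s, f i) / (∑ i ∈ s, g i)) :=
          logsum2 hfa hga hfs hgs (h a (Finset.mem_cons_self a s)) hcond
      _ ≤ f a * Real.log (f a / g a) + ∑ i ∈ s, f i * Real.log (f i / g i) := by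
          linarith [ih hf' hg' h']


/-- The key classical inequality (natural logarithm version). -/
lemma classical_key {ι : Type*} [Fintype ι] (p q s t r : ι → ℝ) {ε d : ℝ}
    (hp0 : ∀ i, 0 ≤ p i) (hq0 : ∀ i, 0 ≤ q i) (hs0 : ∀ i, 0 ≤ s i)
    (ht0 : ∀ i, 0 ≤ t i) (hr0 : ∀ i, 0 ≤ r i)
    (hε : 0 < ε) (hd : 0 < d)
    (hps : ∑ i, p i = 1) (hqs : ∑ i, q i = 1) (hss : ∑ i, s i = 1)
    (hts : ∑ i, t i = ε) (hrs : ∑ i, r i = ε)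
    (hpq : ∀ i, p i ≤ q i + r i) (hrt : ∀ i, r i ≤ d * t i)
    (hsupp : ∀ i, s i = 0 → q i = 0) :
    ∑ i, p i * Real.log (p i / ((1 + ε)⁻¹ * (s i + t i))) ≤
      (∑ i, q i * Real.log (q i / s i)) + ε * Real.log d +
        ((1 + ε) * Real.log (1 + ε) - ε * Real.log ε) := by
  classical
  set u : ι → ℝ := fun i => (1 + ε)⁻¹ * (s i + t i) with hu
  set m : ι → ℝ := fun i => q i + r i with hm
  set w : ι → ℝ := fun i => m i - p i with hw
  have hε1 : (0:ℝ) < 1 + ε := by linarith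
  have hu0 : ∀ i, 0 ≤ u i := fun i => by
    have := hs0 i; have := ht0 i; positivity
  have hw0 : ∀ i, 0 ≤ w i := fun i => by
    have := hpq i; simp only [hw, hm]; linarith
  have hm0 : ∀ i, 0 ≤ m i := fun i => add_nonneg (hq0 i) (hr0 i)
  -- support facts
  have hst0 : ∀ i, u i = 0 → s i = 0 ∧ t i = 0 := by
    intro i hui
    have h1 : s i + t i = 0 := by
      have : (1 + ε)⁻¹ ≠ 0 := by positivity
      exact (mul_eq_zero.mp hui).resolve_left this
    constructor <;> [skip; skip] <;> nlinarith [hs0 i, ht0 i]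
  have hq0' : ∀ i, u i = 0 → q i = 0 := fun i hui => hsupp i (hst0 i hui).1
  have hr0' : ∀ i, u i = 0 → r i = 0 := fun i hui => by
    have := hrt i; have := hr0 i; have := (hst0 i hui).2; nlinarith
  have hm0' : ∀ i, u i = 0 → m i = 0 := fun i hui => by
    simp only [hm]; rw [hq0' i hui, hr0' i hui]; ring
  have hp0' : ∀ i, u i = 0 → p i = 0 := fun i hui => by
    have := hpq i; have := hp0 i
    have := hm0' i hui; simp only [hm] at this; linarith
  have hw0' : ∀ i, u i = 0 → w i = 0 := fun i hui => by
    simp only [hw]; rw [hm0' i hui, hp0' i hui]; ring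
  have hmst : ∀ i, 0 < m i → 0 < s i + t i := by
    intro i hmi
    by_contra hc
    push_neg at hc
    have hst : s i + t i = 0 := le_antisymm hc (add_nonneg (hs0 i) (ht0 i))
    have hui : u i = 0 := by simp [hu, hst]
    exact absurd (hm0' i hui) (ne_of_gt hmi)
  -- sums
  have hsumu : ∑ i, u i = 1 := by
    simp only [hu, ← Finset.mul_sum, Finset.sum_add_distrib, hss, hts]
    field_simp
  have hsumw : ∑ i, w i = ε := by
    simp only [hw, hm, Finset.sum_sub_distrib, Finset.sum_add_distrib, hqs, hrs, hps]
    ring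
  -- (i) split p log (p/u)
  have key1 : ∀ i, p i * Real.log (p i / u i) = p i * Real.log (p i) - p i * Real.log (u i) := by
    intro i
    rcases eq_or_lt_of_le (hp0 i) with h | hpi
    · simp [← h]
    have hui : 0 < u i := by
      rcases lt_or_eq_of_le (hu0 i) with h | h
      · exact h
      · exact absurd (hp0' i h.symm) (ne_of_gt hpi)
    rw [Real.log_div (ne_of_gt hpi) (ne_of_gt hui)]; ring
  -- (ii) split m log (m/(s+t))
  have key2 : ∀ i, m i * Real.log (m i / (s i + t i)) =
      m i * Real.log (m i) - m i * Real.log (s i + t i) := by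
    intro i
    rcases eq_or_lt_of_le (hm0 i) with h | hmi
    · simp [← h]
    rw [Real.log_div (ne_of_gt hmi) (ne_of_gt (hmst i hmi))]; ring
  -- (iii) superadditivity: p log p ≤ m log m − w log w, termwise
  have key3 : ∀ i, p i * Real.log (p i) ≤ m i * Real.log (m i) - w i * Real.log (w i) := by
    intro i
    have h := mul_log_superadd (hp0 i) (hw0 i)
    have hpw : p i + w i = m i := by simp only [hw]; ring
    rw [hpw] at h; linarith
  -- (v) m · (log(s+t) − log u) = m log(1+ε)
  have key5 : ∀ i, m i * Real.log (s i + t i) - m i * Real.log (u i) =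
      m i * Real.log (1 + ε) := by
    intro i
    rcases eq_or_lt_of_le (hm0 i) with h | hmi
    · rw [← h]; ring
    have hst : 0 < s i + t i := hmst i hmi
    have : Real.log (u i) = Real.log (s i + t i) - Real.log (1 + ε) := by
      simp only [hu]
      rw [Real.log_mul (by positivity) (ne_of_gt hst), Real.log_inv]
      ring
    rw [this]; ring
  -- (vi) Σ w log u − Σ w log w ≤ −ε log ε
  have key6 : ∑ i, (w i * Real.log (u i) - w i * Real.log (w i)) ≤ -(ε * Real.log ε) := by
    have hlogsum := sum_logsum Finset.univ w u (fun i _ => hw0 i) (fun i _ => hu0 i)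
      (fun i _ hui => hw0' i hui)
    rw [hsumw, hsumu, div_one] at hlogsum
    have heq : ∀ i, w i * Real.log (w i / u i) = w i * Real.log (w i) - w i * Real.log (u i) := by
      intro i
      rcases eq_or_lt_of_le (hw0 i) with h | hwi
      · simp [← h]
      have hui : 0 < u i := by
        rcases lt_or_eq_of_le (hu0 i) with h | h
        · exact h
        · exact absurd (hw0' i h.symm) (ne_of_gt hwi)
      rw [Real.log_div (ne_of_gt hwi) (ne_of_gt hui)]; ring
    simp only [heq] at hlogsum
    rw [Finset.sum_sub_distrib] at hlogsum ⊢
    linarith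
  -- Claim 2 termwise: m log(m/(s+t)) ≤ q log(q/s) + r log(r/t)
  have claim2 : ∀ i, m i * Real.log (m i / (s i + t i)) ≤
      q i * Real.log (q i / s i) + r i * Real.log (r i / t i) := by
    intro i
    exact logsum2 (hq0 i) (hs0 i) (hr0 i) (ht0 i) (hsupp i)
      (fun hti => by have := hrt i; have := hr0 i; nlinarith)
  -- Claim 3: Σ r log(r/t) ≤ ε log d
  have claim3 : ∑ i, r i * Real.log (r i / t i) ≤ ε * Real.log d := by
    have term : ∀ i, r i * Real.log (r i / t i) ≤ r i * Real.log d := by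
      intro i
      rcases eq_or_lt_of_le (hr0 i) with h | hri
      · simp [← h]
      have hti : 0 < t i := by
        have := hrt i; nlinarith
      have hle : r i / t i ≤ d := (div_le_iff₀ hti).mpr (by linarith [hrt i])
      have hpos : 0 < r i / t i := div_pos hri hti
      exact mul_le_mul_of_nonneg_left (Real.log_le_log hpos hle) (hr0 i)
    calc ∑ i, r i * Real.log (r i / t i) ≤ ∑ i, r i * Real.log d :=
          Finset.sum_le_sum (fun i _ => term i)
      _ = ε * Real.log d := by rw [← Finset.sum_mul, hrs]
  -- assemble
  have main : ∑ i, p i * Real.log (p i / u i) ≤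
      (∑ i, m i * Real.log (m i / (s i + t i))) + ((1 + ε) * Real.log (1 + ε) - ε * Real.log ε) := by
    have e1 : ∑ i, p i * Real.log (p i / u i)
        = (∑ i, p i * Real.log (p i)) - ∑ i, p i * Real.log (u i) := by
      simp only [key1]; rw [Finset.sum_sub_distrib]
    have e2 : ∑ i, m i * Real.log (m i / (s i + t i))
        = (∑ i, m i * Real.log (m i)) - ∑ i, m i * Real.log (s i + t i) := by
      simp only [key2]; rw [Finset.sum_sub_distrib]
    have e3 : ∑ i, p i * Real.log (p i) ≤
        (∑ i, m i * Real.log (m i)) - ∑ i, w i * Real.log (w i) := by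
      rw [← Finset.sum_sub_distrib]
      exact Finset.sum_le_sum (fun i _ => by linarith [key3 i])
    have e4 : ∑ i, p i * Real.log (u i)
        = (∑ i, m i * Real.log (u i)) - ∑ i, w i * Real.log (u i) := by
      rw [← Finset.sum_sub_distrib]
      apply Finset.sum_congr rfl
      intro i _
      simp only [hw]; ring
    have e5 : (∑ i, m i * Real.log (s i + t i)) - ∑ i, m i * Real.log (u i)
        = (1 + ε) * Real.log (1 + ε) := by
      rw [← Finset.sum_sub_distrib]
      have : ∑ i, (m i * Real.log (s i + t i) - m i * Real.log (u i))
          = ∑ i, m i * Real.log (1 + ε) := Finset.sum_congr rfl (fun i _ => key5 i)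
      rw [this, ← Finset.sum_mul]
      have hsm : ∑ i, m i = 1 + ε := by
        simp only [hm, Finset.sum_add_distrib, hqs, hrs]
      rw [hsm]
    have e6 := key6
    rw [Finset.sum_sub_distrib] at e6
    rw [e1, e2]
    linarith
  calc ∑ i, p i * Real.log (p i / u i)
      ≤ (∑ i, m i * Real.log (m i / (s i + t i))) +
        ((1 + ε) * Real.log (1 + ε) - ε * Real.log ε) := main
    _ ≤ (∑ i, (q i * Real.log (q i / s i) + r i * Real.log (r i / t i))) +
        ((1 + ε) * Real.log (1 + ε) - ε * Real.log ε) := by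
        gcongr with i hi  -- termwise claim2
        exact claim2 i
    _ ≤ (∑ i, q i * Real.log (q i / s i)) + ε * Real.log d +
        ((1 + ε) * Real.log (1 + ε) - ε * Real.log ε) := by
        rw [Finset.sum_add_distrib]
        linarith [claim3]




/-- Diagonal entries of PSD matrices have nonnegative real trace. -/
lemma psd_trace_re_nonneg {n : Type} [Fintype n] [DecidableEq n] {M : Matrix n n ℂ}
    (hM : M.PosSemidef) : 0 ≤ M.trace.re := by
  have h : ∀ i, 0 ≤ (M i i).re := by
    intro i
    have h2 := hM.dotProduct_mulVec_nonneg (Pi.single i 1)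
    have : star (Pi.single i 1 : n → ℂ) ⬝ᵥ (M *ᵥ Pi.single i 1) = M i i := by
      simp [dotProduct, Matrix.mulVec, Pi.single_apply, Finset.sum_ite_eq,
        apply_ite (star : ℂ → ℂ)]
    rw [this] at h2
    exact (Complex.le_def.mp h2).1
  rw [Matrix.trace]
  rw [Complex.re_sum]
  exact Finset.sum_nonneg (fun i _ => h i)

/-- `Tr(AB)` has nonnegative real part for PSD `A, B`. -/
lemma trace_mul_re_nonneg {n : Type} [Fintype n] [DecidableEq n] {A B : Matrix n n ℂ}
    (hA : A.PosSemidef) (hB : B.PosSemidef) : 0 ≤ ((A * B).trace).re := by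
  have key : ∀ (U D : Matrix n n ℂ), ((U * D * star U) * B).trace = (D * (star U * B * U)).trace := by
    intro U D
    rw [show U * D * star U * B = U * (D * (star U * B)) by noncomm_ring, Matrix.trace_mul_comm,
      show D * (star U * B) * U = D * (star U * B * U) by noncomm_ring]
  rw [show A = (hA.1.eigenvectorUnitary : Matrix n n ℂ) *
      Matrix.diagonal (fun i => ((hA.1.eigenvalues i : ℝ) : ℂ)) *
      star (hA.1.eigenvectorUnitary : Matrix n n ℂ) from hA.1.spectral_theorem, key]
  have hC := hB.conjTranspose_mul_mul_same (hA.1.eigenvectorUnitary : Matrix n n ℂ)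
  rw [← Matrix.star_eq_conjTranspose] at hC
  simp only [Matrix.trace, Matrix.diag, Matrix.diagonal_mul, Complex.re_sum]
  refine Finset.sum_nonneg (fun i _ => ?_)
  rw [Complex.re_ofReal_mul]
  exact mul_nonneg (hA.eigenvalues_nonneg i) (Complex.le_def.mp hC.diag_nonneg).1

section specfun
variable {n : Type} [Fintype n] [DecidableEq n] {A : Matrix n n ℂ} (hA : A.IsHermitian)

/-- Functional calculus: `U * diag (f ∘ eigenvalues) * U⁻¹`. -/
noncomputable def specFun (f : ℝ → ℝ) : Matrix n n ℂ :=
  (hA.eigenvectorUnitary : Matrix n n ℂ) *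
    Matrix.diagonal (fun i => (f (hA.eigenvalues i) : ℂ)) *
    (star (hA.eigenvectorUnitary : Matrix n n ℂ))

lemma specFun_posSemidef {f : ℝ → ℝ} (hf : ∀ x, 0 ≤ f x) : (specFun hA f).PosSemidef := by
  have hD : (Matrix.diagonal (fun i => (f (hA.eigenvalues i) : ℂ))).PosSemidef :=
    Matrix.PosSemidef.diagonal (fun i => by
      rw [Complex.le_def]; constructor <;> simp [hf])
  have := hD.mul_mul_conjTranspose_same (hA.eigenvectorUnitary : Matrix n n ℂ)
  rwa [← Matrix.star_eq_conjTranspose] at this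

lemma specFun_trace (f : ℝ → ℝ) : (specFun hA f).trace = ((∑ i, f (hA.eigenvalues i) : ℝ) : ℂ) := by
  rw [specFun, Matrix.trace_mul_cycle]
  have hU : star (hA.eigenvectorUnitary : Matrix n n ℂ) * (hA.eigenvectorUnitary : Matrix n n ℂ)
      = 1 := Matrix.mem_unitaryGroup_iff'.mp hA.eigenvectorUnitary.2
  rw [hU, one_mul, Matrix.trace_diagonal]
  push_cast
  rfl

lemma specFun_mul (f g : ℝ → ℝ) :
    specFun hA f * specFun hA g = specFun hA (fun x => f x * g x) := by
  have hU : star (hA.eigenvectorUnitary : Matrix n n ℂ) * (hA.eigenvectorUnitary : Matrix n n ℂ)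
      = 1 := Matrix.mem_unitaryGroup_iff'.mp hA.eigenvectorUnitary.2
  rw [specFun, specFun, specFun]
  rw [show ∀ (U D1 sU D2 : Matrix n n ℂ), U * D1 * sU * (U * D2 * sU) = U * (D1 * (sU * U) * D2) * sU
    from fun U D1 sU D2 => by noncomm_ring]
  rw [hU, mul_one, Matrix.diagonal_mul_diagonal]
  congr 1
  congr 1
  congr 1
  ext i
  push_cast
  rfl

lemma specFun_sub (f g : ℝ → ℝ) :
    specFun hA f - specFun hA g = specFun hA (fun x => f x - g x) := by
  rw [specFun, specFun, specFun, ← Matrix.sub_mul, ← Matrix.mul_sub, Matrix.diagonal_sub]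
  congr 2
  ext i
  push_cast
  rfl

lemma specFun_id : specFun hA (fun x => x) = A := by
  rw [specFun]
  exact hA.spectral_theorem.symm

end specfun


section jordan
variable {n : Type} [Fintype n] [DecidableEq n] {A : Matrix n n ℂ} (hA : A.IsHermitian)

lemma posPart_posSemidef : (specFun hA (fun x => max x 0)).PosSemidef :=
  specFun_posSemidef hA (fun x => le_max_right x 0)

lemma negPart_posSemidef : (specFun hA (fun x => max (-x) 0)).PosSemidef :=
  specFun_posSemidef hA (fun x => le_max_right (-x) 0)

lemma posPart_sub_negPart :
    specFun hA (fun x => max x 0) - specFun hA (fun x => max (-x) 0) = A := by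
  rw [specFun_sub]
  have : (fun x : ℝ => max x 0 - max (-x) 0) = fun x => x := by
    funext x
    rcases le_total x 0 with h | h
    · rw [max_eq_right h, max_eq_left (by linarith)]; ring
    · rw [max_eq_left h, max_eq_right (by linarith)]; ring
  rw [this, specFun_id]

/-- The trace norm of a Hermitian matrix is the sum of the absolute values of its
eigenvalues. -/
lemma traceNorm_hermitian_eq_sum_abs : traceNorm A = ∑ i, |hA.eigenvalues i| := by
  have hS : (specFun hA (fun x => |x|)).PosSemidef := specFun_posSemidef hA (fun x => abs_nonneg x)
  have hsq : (specFun hA (fun x => |x|)) ^ 2 = Aᴴ * A := by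
    rw [pow_two, specFun_mul]
    have : (fun x : ℝ => |x| * |x|) = fun x => x * x := by
      funext x; rw [abs_mul_abs_self]
    rw [this, ← specFun_mul hA, specFun_id, hA.eq]
  have hcfc : ∀ {B : Matrix n n ℂ} (hB : B.IsHermitian) (f : ℝ → ℝ), specFun hB f = cfc f B := by
    intro B hB f
    rw [hB.cfc_eq]
    rfl
  have heq : specFun hA (fun x => |x|) =
      specFun (Matrix.posSemidef_conjTranspose_mul_self A).1 Real.sqrt := by
    have hAA : A * A = cfc (fun x : ℝ => x * x) A := by
      rw [← hcfc hA, ← specFun_mul, specFun_id]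
    rw [hcfc hA, hcfc, hA.eq, hAA, ← cfc_comp Real.sqrt (fun x : ℝ => x * x) A]
    congr 1
    funext x
    simp [Real.sqrt_mul_self_eq_abs]
  rw [traceNorm]
  show (specFun (Matrix.posSemidef_conjTranspose_mul_self A).1 Real.sqrt).trace.re = _
  rw [← heq, specFun_trace]
  simp

lemma trace_hermitian_eq_sum : A.trace = ((∑ i, hA.eigenvalues i : ℝ) : ℂ) := by
  conv_lhs => rw [← specFun_id hA]
  exact specFun_trace hA _

end jordan



section sums
variable {n m ι : Type} [Fintype n] [Fintype m] [Fintype ι]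

lemma sum_mulVec' (A : ι → Matrix m n ℂ) (v : n → ℂ) :
    (∑ i, A i) *ᵥ v = ∑ i, A i *ᵥ v := by
  ext j
  simp only [Matrix.mulVec, dotProduct, Matrix.sum_apply, Finset.sum_apply,
    Finset.sum_mul]
  rw [Finset.sum_comm]

lemma mulVec_sum' (M : Matrix m n ℂ) (w : ι → n → ℂ) :
    M *ᵥ (∑ i, w i) = ∑ i, M *ᵥ w i := by
  ext j
  simp only [Matrix.mulVec, dotProduct, Finset.sum_apply, Finset.mul_sum]
  rw [Finset.sum_comm]

lemma sum_dotProduct' (u : ι → n → ℂ) (v : n → ℂ) :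
    (∑ i, u i) ⬝ᵥ v = ∑ i, u i ⬝ᵥ v := by
  simp only [dotProduct, Finset.sum_apply, Finset.sum_mul]
  rw [Finset.sum_comm]

lemma dotProduct_sum' (v : n → ℂ) (u : ι → n → ℂ) :
    v ⬝ᵥ (∑ i, u i) = ∑ i, v ⬝ᵥ u i := by
  simp only [dotProduct, Finset.sum_apply, Finset.mul_sum]
  rw [Finset.sum_comm]

lemma posSemidef_sum (s : Finset ι) (f : ι → Matrix n n ℂ)
    (h : ∀ i ∈ s, (f i).PosSemidef) : (∑ i ∈ s, f i).PosSemidef := by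
  classical
  induction s using Finset.induction_on with
  | empty => simpa using (Matrix.PosSemidef.zero (n := n) (R := ℂ))
  | @insert a s' hx ih =>
    rw [Finset.sum_insert hx]
    exact (h a (Finset.mem_insert_self a s')).add
      (ih (fun i hi => h i (Finset.mem_insert_of_mem hi)))

end sums

section pinch
variable {n ι : Type} [Fintype n] [DecidableEq n] [Fintype ι] [DecidableEq ι]

/-- Pinching of a matrix along the fibers of `c`. -/
def pinch (c : n → ι) (M : Matrix n n ℂ) : Matrix n n ℂ :=
  fun p q => if c p = c q then M p q else 0

/-- The pinching projections. -/
def pinchP (c : n → ι) (i : ι) : Matrix n n ℂ :=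
  Matrix.diagonal (fun p => if c p = i then 1 else 0)

lemma pinchP_conjTranspose (c : n → ι) (i : ι) : (pinchP c i)ᴴ = pinchP c i := by
  ext p q
  rw [Matrix.conjTranspose_apply, pinchP]
  by_cases h : p = q
  · subst h
    simp [Matrix.diagonal_apply_eq, apply_ite (star : ℂ → ℂ)]
  · rw [Matrix.diagonal_apply_ne _ (Ne.symm h), Matrix.diagonal_apply_ne _ h, star_zero]

lemma pinchP_sum (c : n → ι) : ∑ i, pinchP c i = 1 := by
  ext p q
  simp only [Matrix.sum_apply, pinchP, Matrix.diagonal_apply, Matrix.one_apply]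
  by_cases h : p = q
  · subst h
    simp [Finset.sum_ite_eq']
  · simp [h]

lemma pinch_eq_sum (c : n → ι) (M : Matrix n n ℂ) :
    pinch c M = ∑ i, pinchP c i * M * pinchP c i := by
  ext p q
  simp only [Matrix.sum_apply, pinchP, Matrix.diagonal_mul, Matrix.mul_diagonal, pinch]
  rw [Finset.sum_congr rfl (fun i _ => show (if c p = i then 1 else 0) * M p q *
      (if c q = i then 1 else 0) = if c p = i ∧ c q = i then M p q else 0 by
    split_ifs with h1 h2 h3 h4 <;> simp_all <;> ring)]
  by_cases h : c p = c q
  · rw [if_pos h]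
    rw [Finset.sum_congr rfl (fun i _ => show (if c p = i ∧ c q = i then M p q else 0)
        = if c p = i then M p q else 0 by rw [← h]; simp [and_self])]
    simp [Finset.sum_ite_eq]
  · rw [if_neg h]
    refine (Finset.sum_eq_zero ?_).symm
    intro i _
    rw [if_neg]
    rintro ⟨h1, h2⟩
    exact h (h1.trans h2.symm)

lemma pinch_posSemidef {c : n → ι} {M : Matrix n n ℂ} (hM : M.PosSemidef) :
    (pinch c M).PosSemidef := by
  rw [pinch_eq_sum]
  apply posSemidef_sum
  intro i _
  have h := hM.mul_mul_conjTranspose_same (pinchP c i)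
  rwa [pinchP_conjTranspose] at h

lemma pinch_trace (c : n → ι) (M : Matrix n n ℂ) : (pinch c M).trace = M.trace := by
  unfold Matrix.trace
  apply Finset.sum_congr rfl
  intro p _
  simp [Matrix.diag, pinch]

/-- Cauchy–Schwarz-type bound for quadratic forms of PSD matrices. -/
lemma quad_cs {M : Matrix n n ℂ} (hM : M.PosSemidef) (w : ι → n → ℂ) :
    star (∑ i, w i) ⬝ᵥ M *ᵥ (∑ i, w i) ≤
      (Fintype.card ι : ℂ) * ∑ i, star (w i) ⬝ᵥ M *ᵥ (w i) := by
  have key : ∀ u v : n → ℂ, star u ⬝ᵥ M *ᵥ v + star v ⬝ᵥ M *ᵥ u ≤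
      star u ⬝ᵥ M *ᵥ u + star v ⬝ᵥ M *ᵥ v := by
    intro u v
    have h := hM.dotProduct_mulVec_nonneg (u - v)
    rw [Matrix.mulVec_sub, star_sub, sub_dotProduct, dotProduct_sub,
      dotProduct_sub] at h
    rw [← sub_nonneg]
    convert h using 1
    ring
  have expand : star (∑ i, w i) ⬝ᵥ M *ᵥ (∑ i, w i)
      = ∑ i, ∑ j, star (w i) ⬝ᵥ M *ᵥ (w j) := by
    rw [star_sum, mulVec_sum', sum_dotProduct']
    exact Finset.sum_congr rfl (fun i _ => dotProduct_sum' _ _)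
  have swap : ∑ i, ∑ j, star (w j) ⬝ᵥ M *ᵥ (w i) = ∑ i, ∑ j, star (w i) ⬝ᵥ M *ᵥ (w j) :=
    Finset.sum_comm
  have h2 : (2 : ℂ) * (star (∑ i, w i) ⬝ᵥ M *ᵥ (∑ i, w i)) ≤
      (2 : ℂ) * ((Fintype.card ι : ℂ) * ∑ i, star (w i) ⬝ᵥ M *ᵥ (w i)) := by
    rw [expand]
    have lhs_eq : (2 : ℂ) * ∑ i, ∑ j, star (w i) ⬝ᵥ M *ᵥ (w j)
        = ∑ i, ∑ j, (star (w i) ⬝ᵥ M *ᵥ (w j) + star (w j) ⬝ᵥ M *ᵥ (w i)) := by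
      simp only [Finset.sum_add_distrib]
      rw [swap]
      ring
    have rhs_eq : (2 : ℂ) * ((Fintype.card ι : ℂ) * ∑ i, star (w i) ⬝ᵥ M *ᵥ (w i))
        = ∑ i : ι, ∑ j : ι, (star (w i) ⬝ᵥ M *ᵥ (w i) + star (w j) ⬝ᵥ M *ᵥ (w j)) := by
      simp only [Finset.sum_add_distrib, Finset.sum_const, Finset.card_univ, nsmul_eq_mul,
        Finset.mul_sum, Finset.sum_mul]
      ring_nf
      rw [Finset.sum_mul]
    rw [lhs_eq, rhs_eq]
    exact Finset.sum_le_sum (fun i _ => Finset.sum_le_sum (fun j _ => key (w i) (w j)))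
  -- cancel the factor 2 via real and imaginary parts
  rw [Complex.le_def] at h2 ⊢
  simp only [Complex.mul_re, Complex.mul_im, Complex.re_ofNat, Complex.im_ofNat,
    Complex.natCast_re, Complex.natCast_im] at h2 ⊢
  obtain ⟨h2a, h2b⟩ := h2
  constructor
  · linarith
  · linarith

lemma pinch_dominates {c : n → ι} {M : Matrix n n ℂ} (hM : M.PosSemidef) :
    ((Fintype.card ι : ℂ) • pinch c M - M).PosSemidef := by
  have hherm : ((Fintype.card ι : ℂ) • pinch c M - M).IsHermitian := by
    have h1 : (pinch c M).IsHermitian := (pinch_posSemidef (c := c) hM).1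
    unfold Matrix.IsHermitian
    rw [Matrix.conjTranspose_sub, Matrix.conjTranspose_smul, h1.eq, hM.1.eq]
    congr 1
    simp
  refine Matrix.PosSemidef.of_dotProduct_mulVec_nonneg hherm (fun x => ?_)
  rw [Matrix.sub_mulVec, dotProduct_sub, Matrix.smul_mulVec,
    dotProduct_smul, smul_eq_mul]
  rw [sub_nonneg]
  set w : ι → n → ℂ := fun i => pinchP c i *ᵥ x with hw
  have hx : x = ∑ i, w i := by
    simp only [hw]
    rw [← sum_mulVec', pinchP_sum, Matrix.one_mulVec]
  have hterm : ∀ i, star x ⬝ᵥ (pinchP c i * M * pinchP c i) *ᵥ x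
      = star (w i) ⬝ᵥ M *ᵥ (w i) := by
    intro i
    have h1 : star (w i) = star x ᵥ* pinchP c i := by
      simp only [hw]
      rw [Matrix.star_mulVec, pinchP_conjTranspose]
    rw [← Matrix.mulVec_mulVec, ← Matrix.mulVec_mulVec, Matrix.dotProduct_mulVec, ← h1]
  calc star x ⬝ᵥ M *ᵥ x = star (∑ i, w i) ⬝ᵥ M *ᵥ (∑ i, w i) := by rw [← hx]
    _ ≤ (Fintype.card ι : ℂ) * ∑ i, star (w i) ⬝ᵥ M *ᵥ (w i) := quad_cs hM w
    _ = (Fintype.card ι : ℂ) * (star x ⬝ᵥ (pinch c M) *ᵥ x) := by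
        rw [pinch_eq_sum]
        congr 1
        rw [← Finset.sum_congr rfl (fun i _ => hterm i)]
        rw [sum_mulVec', dotProduct_sum']

end pinch

section blockdiag

variable {a b : Type} [Fintype a] [DecidableEq a] [Fintype b] [DecidableEq b]

/-- Block-diagonal bipartite matrix with blocks indexed by the first factor. -/
def blockDiag (C : a → Matrix b b ℂ) : Matrix (a × b) (a × b) ℂ :=
  fun p q => if p.1 = q.1 then C p.1 p.2 q.2 else 0

lemma blockDiag_posSemidef {C : a → Matrix b b ℂ} (hC : ∀ j, (C j).PosSemidef) :
    (blockDiag C).PosSemidef := by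
  refine Matrix.PosSemidef.of_dotProduct_mulVec_nonneg ?_ ?_
  · ext p q
    rw [Matrix.conjTranspose_apply, blockDiag, blockDiag]
    by_cases h : p.1 = q.1
    · rw [if_pos h, if_pos h.symm]
      have := (hC q.1).1
      calc star (C q.1 q.2 p.2) = (C q.1)ᴴ p.2 q.2 := rfl
        _ = C q.1 p.2 q.2 := by rw [this]
        _ = C p.1 p.2 q.2 := by rw [h]
    · rw [if_neg h, if_neg (fun hh => h hh.symm), star_zero]
  · intro x
    have expand : star x ⬝ᵥ (blockDiag C) *ᵥ x
        = ∑ j : a, star (fun v => x (j, v)) ⬝ᵥ (C j) *ᵥ (fun v => x (j, v)) := by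
      simp only [dotProduct, Matrix.mulVec, Pi.star_apply]
      rw [Fintype.sum_prod_type]
      apply Finset.sum_congr rfl
      intro j _
      apply Finset.sum_congr rfl
      intro v _
      congr 1
      rw [Fintype.sum_prod_type]
      rw [show ∀ z : a → ℂ, ∑ j' : a, z j' = ∑ j' : a, z j' from fun _ => rfl]
      have : ∀ j' : a, ∑ w : b, blockDiag C (j, v) (j', w) * x (j', w)
          = if j = j' then ∑ w : b, C j v w * x (j, w) else 0 := by
        intro j'
        by_cases h : j = j'
        · subst h
          simp [blockDiag]
        · simp [blockDiag, h]
      rw [Finset.sum_congr rfl (fun j' _ => this j')]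
      simp [Finset.sum_ite_eq]
    rw [expand]
    exact Finset.sum_nonneg (fun j _ => (hC j).dotProduct_mulVec_nonneg _)

lemma pinch_fst_eq_blockDiag (M : Matrix (a × b) (a × b) ℂ) :
    pinch Prod.fst M = blockDiag (fun j => M.submatrix (Prod.mk j) (Prod.mk j)) := by
  ext ⟨p1, p2⟩ ⟨q1, q2⟩
  rw [pinch, blockDiag]
  dsimp only
  by_cases h : p1 = q1
  · subst h
    rw [if_pos rfl, if_pos rfl, Matrix.submatrix_apply]
  · rw [if_neg h, if_neg h]

lemma ptB_pinch_fst_eq (M : Matrix (a × b) (a × b) ℂ) :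
    ptB (pinch Prod.fst M) = blockDiag (fun j => (M.submatrix (Prod.mk j) (Prod.mk j))ᵀ) := by
  ext ⟨p1, p2⟩ ⟨q1, q2⟩
  rw [ptB, pinch, blockDiag]
  dsimp only
  by_cases h : p1 = q1
  · subst h
    rw [if_pos rfl, if_pos rfl, Matrix.transpose_apply, Matrix.submatrix_apply]
  · rw [if_neg h, if_neg h]

lemma ptB_pinch_snd_eq (M : Matrix (a × b) (a × b) ℂ) :
    ptB (pinch Prod.snd M) = pinch Prod.snd M := by
  ext ⟨p1, p2⟩ ⟨q1, q2⟩
  rw [ptB, pinch, pinch]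
  dsimp only
  by_cases h : p2 = q2
  · subst h
    rw [if_pos rfl]
  · rw [if_neg (fun hh => h hh.symm), if_neg h]

/-- Separability of the `A`-pinching of a PSD matrix. -/
lemma pinch_fst_inSepCone {M : Matrix (a × b) (a × b) ℂ} (hM : M.PosSemidef) :
    InSepCone (pinch Prod.fst M) := by
  classical
  set e : Fin (Fintype.card a) ≃ a := (Fintype.equivFin a).symm with he
  refine ⟨Fintype.card a,
    fun i => Matrix.diagonal (fun j => if j = e i then 1 else 0),
    fun i => M.submatrix (Prod.mk (e i)) (Prod.mk (e i)), ?_, ?_, ?_⟩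
  · intro i
    apply Matrix.PosSemidef.diagonal
    intro j
    dsimp only
    split_ifs
    · exact zero_le_one
    · exact le_refl 0
  · intro i
    exact hM.submatrix _
  · ext p q
    obtain ⟨j, v⟩ := p
    obtain ⟨j', w⟩ := q
    simp only [Matrix.sum_apply, Matrix.kroneckerMap_apply, Matrix.diagonal_apply,
      Matrix.submatrix_apply, pinch]
    by_cases h : j = j'
    · subst h
      rw [if_pos rfl]
      have step : ∀ i, (if j = j then (if j = e i then (1:ℂ) else 0) else 0) *
          M (e i, v) (e i, w) = if i = e.symm j then M (j, v) (j, w) else 0 := by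
        intro i
        rw [if_pos rfl]
        by_cases hij : i = e.symm j
        · subst hij
          rw [if_pos (by rw [Equiv.apply_symm_apply]), one_mul, if_pos rfl,
            Equiv.apply_symm_apply]
        · rw [if_neg (fun hc => hij (by rw [hc, Equiv.symm_apply_apply])), zero_mul,
            if_neg hij]
      rw [Finset.sum_congr rfl (fun i _ => step i)]
      simp [Finset.sum_ite_eq']
    · rw [if_neg h]
      refine (Finset.sum_eq_zero ?_).symm
      intro i _
      rw [if_neg h, zero_mul]


/-- Separability of the `B`-pinching of a PSD matrix. -/
lemma pinch_snd_inSepCone {M : Matrix (a × b) (a × b) ℂ} (hM : M.PosSemidef) :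
    InSepCone (pinch Prod.snd M) := by
  classical
  set e : Fin (Fintype.card b) ≃ b := (Fintype.equivFin b).symm with he
  refine ⟨Fintype.card b,
    fun i => M.submatrix (fun u => (u, e i)) (fun u => (u, e i)),
    fun i => Matrix.diagonal (fun v => if v = e i then 1 else 0), ?_, ?_, ?_⟩
  · intro i
    exact hM.submatrix _
  · intro i
    apply Matrix.PosSemidef.diagonal
    intro v
    dsimp only
    split_ifs
    · exact zero_le_one
    · exact le_refl 0
  · ext p q
    obtain ⟨j, v⟩ := p
    obtain ⟨j', w⟩ := q
    simp only [Matrix.sum_apply, Matrix.kroneckerMap_apply, Matrix.diagonal_apply,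
      Matrix.submatrix_apply, pinch]
    by_cases h : v = w
    · subst h
      rw [if_pos rfl]
      have step : ∀ i, M (j, e i) (j', e i) * (if v = v then (if v = e i then (1:ℂ) else 0) else 0)
          = if i = e.symm v then M (j, v) (j', v) else 0 := by
        intro i
        rw [if_pos rfl]
        by_cases hiv : i = e.symm v
        · subst hiv
          rw [if_pos (by rw [Equiv.apply_symm_apply]), mul_one, if_pos rfl,
            Equiv.apply_symm_apply]
        · rw [if_neg (fun hc => hiv (by rw [hc, Equiv.symm_apply_apply])), mul_zero,
            if_neg hiv]
      rw [Finset.sum_congr rfl (fun i _ => step i)]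
      simp [Finset.sum_ite_eq']
    · rw [if_neg h]
      refine (Finset.sum_eq_zero ?_).symm
      intro i _
      rw [if_neg h, mul_zero]

lemma ptB_pinch_fst_posSemidef {M : Matrix (a × b) (a × b) ℂ} (hM : M.PosSemidef) :
    (ptB (pinch Prod.fst M)).PosSemidef := by
  rw [ptB_pinch_fst_eq]
  exact blockDiag_posSemidef (fun j => (hM.submatrix (Prod.mk j)).transpose)

end blockdiag

section cones
variable {a b n : Type} [Fintype a] [DecidableEq a] [Fintype b] [DecidableEq b]
  [Fintype n] [DecidableEq n]

lemma smul_posSemidef {c : ℝ} (hc : 0 ≤ c) {M : Matrix n n ℂ} (hM : M.PosSemidef) :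
    ((c : ℂ) • M).PosSemidef := by
  refine Matrix.PosSemidef.of_dotProduct_mulVec_nonneg ?_ ?_
  · unfold Matrix.IsHermitian
    rw [Matrix.conjTranspose_smul, hM.1.eq]
    congr 1
    exact Complex.conj_ofReal c
  · intro x
    rw [Matrix.smul_mulVec, dotProduct_smul, smul_eq_mul]
    refine mul_nonneg ?_ (hM.dotProduct_mulVec_nonneg x)
    rw [Complex.le_def]
    simp [hc]

lemma sep_smul {c : ℝ} (hc : 0 ≤ c) {M : Matrix (a × b) (a × b) ℂ} (hM : InSepCone M) :
    InSepCone ((c : ℂ) • M) := by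
  obtain ⟨k, x, y, hx, hy, hsum⟩ := hM
  refine ⟨k, fun i => (c : ℂ) • x i, y, fun i => smul_posSemidef hc (hx i), hy, ?_⟩
  rw [hsum, Finset.smul_sum]
  apply Finset.sum_congr rfl
  intro i _
  rw [Matrix.smul_kronecker]

lemma sep_add {M N : Matrix (a × b) (a × b) ℂ} (hM : InSepCone M) (hN : InSepCone N) :
    InSepCone (M + N) := by
  obtain ⟨k, x, y, hx, hy, hsum⟩ := hM
  obtain ⟨k', x', y', hx', hy', hsum'⟩ := hN
  refine ⟨k + k', Fin.addCases x x', Fin.addCases y y', ?_, ?_, ?_⟩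
  · intro i
    refine Fin.addCases (fun j => ?_) (fun j => ?_) i <;> simp [hx, hx']
  · intro i
    refine Fin.addCases (fun j => ?_) (fun j => ?_) i <;> simp [hy, hy']
  · rw [hsum, hsum', Fin.sum_univ_add]
    congr 1
    · apply Finset.sum_congr rfl
      intro i _
      simp only [Fin.addCases_left]
    · apply Finset.sum_congr rfl
      intro i _
      simp only [Fin.addCases_right]

lemma ptB_add (M N : Matrix (a × b) (a × b) ℂ) : ptB (M + N) = ptB M + ptB N := rfl

lemma ptB_smul (c : ℂ) (M : Matrix (a × b) (a × b) ℂ) : ptB (c • M) = c • ptB M := rfl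

end cones


section specExtra
variable {n : Type} [Fintype n] [DecidableEq n]

lemma specFun_congr {A : Matrix n n ℂ} (hA : A.IsHermitian) {f g : ℝ → ℝ}
    (h : ∀ i, f (hA.eigenvalues i) = g (hA.eigenvalues i)) : specFun hA f = specFun hA g := by
  have hfg : (fun i => (f (hA.eigenvalues i) : ℂ)) = fun i => (g (hA.eigenvalues i) : ℂ) :=
    funext fun i => by rw [h i]
  rw [specFun, specFun, hfg]

lemma specFun_zero {A : Matrix n n ℂ} (hA : A.IsHermitian) :
    specFun hA (fun _ => 0) = 0 := by
  rw [specFun]; simp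

lemma sqrt_congr {A B : Matrix n n ℂ} (h : A = B) (hA : A.IsHermitian) (hB : B.IsHermitian) :
    ((hA.eigenvectorUnitary : Matrix n n ℂ) *
      Matrix.diagonal (fun i => ((Real.sqrt (hA.eigenvalues i) : ℝ) : ℂ)) *
      (star hA.eigenvectorUnitary : Matrix n n ℂ)) =
    ((hB.eigenvectorUnitary : Matrix n n ℂ) *
      Matrix.diagonal (fun i => ((Real.sqrt (hB.eigenvalues i) : ℝ) : ℂ)) *
      (star hB.eigenvectorUnitary : Matrix n n ℂ)) := by subst h; rfl

lemma traceNorm_neg (M : Matrix n n ℂ) : traceNorm (-M) = traceNorm M := by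
  rw [traceNorm, traceNorm,
    sqrt_congr (show (-M)ᴴ * (-M) = Mᴴ * M by simp) _ (Matrix.posSemidef_conjTranspose_mul_self M).1]

lemma povm_sum_re {k : ℕ} {E : Fin k → Matrix n n ℂ} (hE : ∑ i, E i = 1) (X : Matrix n n ℂ) :
    ∑ i, ((E i * X).trace).re = X.trace.re := by
  have h : ∑ i, (E i * X).trace = X.trace := by
    rw [← Matrix.trace_sum, ← Finset.sum_mul, hE, one_mul]
  rw [← h, Complex.re_sum]

end specExtra

section assembly
variable {a b : Type} [Fintype a] [DecidableEq a] [Fintype b] [DecidableEq b]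

lemma perPOVM {ρ ω σ T Dp : Matrix (a × b) (a × b) ℂ} {ε d : ℝ}
    (hρ : IsState ρ) (hω : IsState ω) (hσ : IsState σ)
    (hT : T.PosSemidef) (hDp : Dp.PosSemidef)
    (hDpSub : (Dp - (ρ - ω)).PosSemidef)
    (hTd : (((d : ℝ) : ℂ) • T - Dp).PosSemidef)
    (hDptr : Dp.trace = (ε : ℂ)) (hTtr : T.trace = (ε : ℂ))
    (hε : 0 < ε) (hd : 0 < d)
    {k : ℕ} {E : Fin k → Matrix (a × b) (a × b) ℂ} (hE : IsPOVM E) :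
    klDiv (fun i => ((E i) * ρ).trace.re)
        (fun i => ((E i) * ((((1 + ε)⁻¹ : ℝ) : ℂ) • (σ + T))).trace.re) ≤
      klDiv (fun i => ((E i) * ω).trace.re) (fun i => ((E i) * σ).trace.re) +
        ENNReal.ofReal (ε * Real.logb 2 d + gAFW ε) := by
  classical
  set p : Fin k → ℝ := fun i => ((E i) * ρ).trace.re with hpdef
  set q : Fin k → ℝ := fun i => ((E i) * ω).trace.re with hqdef
  set s : Fin k → ℝ := fun i => ((E i) * σ).trace.re with hsdef
  set t : Fin k → ℝ := fun i => ((E i) * T).trace.re with htdef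
  set r : Fin k → ℝ := fun i => ((E i) * Dp).trace.re with hrdef
  have hufun : (fun i => ((E i) * ((((1 + ε)⁻¹ : ℝ) : ℂ) • (σ + T))).trace.re)
      = fun i => (1 + ε)⁻¹ * (s i + t i) := by
    funext i
    rw [mul_smul_comm, Matrix.trace_smul, mul_add, Matrix.trace_add, smul_eq_mul,
      Complex.mul_re, Complex.ofReal_re, Complex.ofReal_im, zero_mul, sub_zero,
      Complex.add_re]
  rw [hufun]
  have hp0 : ∀ i, 0 ≤ p i := fun i => trace_mul_re_nonneg (hE.1 i) hρ.1
  have hq0 : ∀ i, 0 ≤ q i := fun i => trace_mul_re_nonneg (hE.1 i) hω.1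
  have hs0 : ∀ i, 0 ≤ s i := fun i => trace_mul_re_nonneg (hE.1 i) hσ.1
  have ht0 : ∀ i, 0 ≤ t i := fun i => trace_mul_re_nonneg (hE.1 i) hT
  have hr0 : ∀ i, 0 ≤ r i := fun i => trace_mul_re_nonneg (hE.1 i) hDp
  have hps : ∑ i, p i = 1 := by
    have h := povm_sum_re hE.2 ρ
    rw [hρ.2] at h
    simpa using h
  have hqs : ∑ i, q i = 1 := by
    have h := povm_sum_re hE.2 ω
    rw [hω.2] at h
    simpa using h
  have hss : ∑ i, s i = 1 := by
    have h := povm_sum_re hE.2 σ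
    rw [hσ.2] at h
    simpa using h
  have hts : ∑ i, t i = ε := by
    have h := povm_sum_re hE.2 T
    rw [hTtr] at h
    simpa using h
  have hrs : ∑ i, r i = ε := by
    have h := povm_sum_re hE.2 Dp
    rw [hDptr] at h
    simpa using h
  have hpq : ∀ i, p i ≤ q i + r i := by
    intro i
    have h0 := trace_mul_re_nonneg (hE.1 i) hDpSub
    have heq : E i * (Dp - (ρ - ω)) = E i * Dp - E i * ρ + E i * ω := by noncomm_ring
    rw [heq, Matrix.trace_add, Matrix.trace_sub, Complex.add_re, Complex.sub_re] at h0
    simp only [hpdef, hqdef, hrdef]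
    linarith
  have hrt : ∀ i, r i ≤ d * t i := by
    intro i
    have h0 := trace_mul_re_nonneg (hE.1 i) hTd
    have heq : E i * (((d : ℝ) : ℂ) • T - Dp) = ((d : ℝ) : ℂ) • (E i * T) - E i * Dp := by
      rw [Matrix.mul_sub, mul_smul_comm]
    rw [heq, Matrix.trace_sub, Matrix.trace_smul, Complex.sub_re, smul_eq_mul,
      Complex.mul_re] at h0
    simp only [Complex.ofReal_re, Complex.ofReal_im, zero_mul, sub_zero] at h0
    simp only [hrdef, htdef]
    linarith
  by_cases hsupp : ∀ i, s i = 0 → q i = 0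
  case neg =>
    have hqstop : klDiv q s = ⊤ := by rw [klDiv, if_neg hsupp]
    rw [hqstop, top_add]
    exact le_top
  case pos =>
    have husupp : ∀ i, (1 + ε)⁻¹ * (s i + t i) = 0 → p i = 0 := by
      intro i hz
      have hinv : (0 : ℝ) < (1 + ε)⁻¹ := by positivity
      have hst : s i + t i = 0 := by
        rcases mul_eq_zero.mp hz with h | h
        · exact absurd h (ne_of_gt hinv)
        · exact h
      have hsz : s i = 0 := by nlinarith [hs0 i, ht0 i]
      have htz : t i = 0 := by nlinarith [hs0 i, ht0 i]
      have hqz : q i = 0 := hsupp i hsz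
      have hrz : r i = 0 := by nlinarith [hrt i, hr0 i]
      nlinarith [hpq i, hp0 i]
    rw [klDiv, klDiv, if_pos husupp, if_pos hsupp]
    have hlog2 : (0 : ℝ) < Real.log 2 := Real.log_pos one_lt_two
    have logb_eq : ∀ x : ℝ, Real.logb 2 x = Real.log x * (Real.log 2)⁻¹ := fun x => by
      rw [Real.logb, div_eq_mul_inv]
    have hln := classical_key p q s t r hp0 hq0 hs0 ht0 hr0 hε hd hps hqs hss hts hrs hpq hrt hsupp
    have hreal : ∑ i, p i * Real.logb 2 (p i / ((1 + ε)⁻¹ * (s i + t i))) ≤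
        (∑ i, q i * Real.logb 2 (q i / s i)) + (ε * Real.logb 2 d + gAFW ε) := by
      have c1 : ∑ i, p i * Real.logb 2 (p i / ((1 + ε)⁻¹ * (s i + t i)))
          = (∑ i, p i * Real.log (p i / ((1 + ε)⁻¹ * (s i + t i)))) * (Real.log 2)⁻¹ := by
        rw [Finset.sum_mul]
        exact Finset.sum_congr rfl (fun i _ => by rw [logb_eq]; ring)
      have c2 : ∑ i, q i * Real.logb 2 (q i / s i)
          = (∑ i, q i * Real.log (q i / s i)) * (Real.log 2)⁻¹ := by
        rw [Finset.sum_mul]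
        exact Finset.sum_congr rfl (fun i _ => by rw [logb_eq]; ring)
      have c3 : ε * Real.logb 2 d + gAFW ε
          = (ε * Real.log d + ((1 + ε) * Real.log (1 + ε) - ε * Real.log ε)) *
              (Real.log 2)⁻¹ := by
        rw [gAFW, logb_eq, logb_eq, logb_eq]; ring
      rw [c1, c2, c3, ← add_mul]
      exact mul_le_mul_of_nonneg_right (by linarith) (inv_nonneg.mpr hlog2.le)
    calc ENNReal.ofReal (∑ i, p i * Real.logb 2 (p i / ((1 + ε)⁻¹ * (s i + t i))))
        ≤ ENNReal.ofReal ((∑ i, q i * Real.logb 2 (q i / s i)) +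
            (ε * Real.logb 2 d + gAFW ε)) := ENNReal.ofReal_le_ofReal hreal
      _ ≤ _ := ENNReal.ofReal_add_le

lemma key_core (κ : ConeKind)
    (Meas : ∀ k : ℕ, (Fin k → Matrix (a × b) (a × b) ℂ) → Prop)
    {ρ ω T Dp : Matrix (a × b) (a × b) ℂ} {ε d : ℝ}
    (hρ : IsState ρ) (hω : IsState ω)
    (hT : T.PosSemidef) (hDp : Dp.PosSemidef)
    (hDpSub : (Dp - (ρ - ω)).PosSemidef)
    (hTd : (((d : ℝ) : ℂ) • T - Dp).PosSemidef)
    (hDptr : Dp.trace = (ε : ℂ)) (hTtr : T.trace = (ε : ℂ))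
    (hTsep : InSepCone T) (hTptB : (ptB T).PosSemidef)
    (hε : 0 < ε) (hd : 0 < d) :
    DMeasGen κ Meas ρ ≤ DMeasGen κ Meas ω + ENNReal.ofReal (ε * Real.logb 2 d + gAFW ε) := by
  classical
  simp only [DMeasGen]
  rw [← tsub_le_iff_right]
  refine le_iInf fun σ => le_iInf fun hσ => le_iInf fun hcone => ?_
  rw [tsub_le_iff_right]
  have hc0 : (0 : ℝ) ≤ (1 + ε)⁻¹ := by positivity
  have hσ'psd : ((((1 + ε)⁻¹ : ℝ) : ℂ) • (σ + T)).PosSemidef :=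
    smul_posSemidef hc0 (hσ.1.add hT)
  have hσ'state : IsState ((((1 + ε)⁻¹ : ℝ) : ℂ) • (σ + T)) := by
    refine ⟨hσ'psd, ?_⟩
    rw [Matrix.trace_smul, Matrix.trace_add, hσ.2, hTtr, smul_eq_mul]
    have h1 : (1 : ℂ) + (ε : ℂ) = (((1 + ε) : ℝ) : ℂ) := by push_cast; ring
    rw [h1, ← Complex.ofReal_mul,
      inv_mul_cancel₀ (by positivity : (1 + ε : ℝ) ≠ 0), Complex.ofReal_one]
  have hσ'cone : inCone κ ((((1 + ε)⁻¹ : ℝ) : ℂ) • (σ + T)) := by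
    cases κ with
    | sep => exact sep_smul hc0 (sep_add hcone hTsep)
    | ppt =>
      refine ⟨smul_posSemidef hc0 (hcone.1.add hT), ?_⟩
      rw [ptB_smul, ptB_add]
      exact smul_posSemidef hc0 (hcone.2.add hTptB)
  have hstep : (⨅ (σ₀ : Matrix (a × b) (a × b) ℂ) (_ : IsState σ₀) (_ : inCone κ σ₀),
      ⨆ (k : ℕ) (E : Fin k → Matrix (a × b) (a × b) ℂ) (_ : IsPOVM E) (_ : Meas k E),
        klDiv (fun i => ((E i) * ρ).trace.re) (fun i => ((E i) * σ₀).trace.re))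
      ≤ ⨆ (k : ℕ) (E : Fin k → Matrix (a × b) (a × b) ℂ) (_ : IsPOVM E) (_ : Meas k E),
        klDiv (fun i => ((E i) * ρ).trace.re)
          (fun i => ((E i) * ((((1 + ε)⁻¹ : ℝ) : ℂ) • (σ + T))).trace.re) := by
    refine iInf_le_of_le ((((1 + ε)⁻¹ : ℝ) : ℂ) • (σ + T)) ?_
    exact le_trans (iInf_le _ hσ'state) (iInf_le _ hσ'cone)
  refine le_trans hstep ?_
  refine iSup_le fun k => iSup_le fun E => iSup_le fun hE => iSup_le fun hM => ?_
  calc klDiv (fun i => ((E i) * ρ).trace.re)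
        (fun i => ((E i) * ((((1 + ε)⁻¹ : ℝ) : ℂ) • (σ + T))).trace.re)
      ≤ klDiv (fun i => ((E i) * ω).trace.re) (fun i => ((E i) * σ).trace.re) +
          ENNReal.ofReal (ε * Real.logb 2 d + gAFW ε) :=
        perPOVM hρ hω hσ hT hDp hDpSub hTd hDptr hTtr hε hd hE
    _ ≤ _ := by
        gcongr
        refine le_iSup_of_le k ?_
        refine le_iSup_of_le E ?_
        refine le_iSup_of_le hE ?_
        exact le_iSup_of_le hM le_rfl

lemma key (κ : ConeKind)
    (Meas : ∀ k : ℕ, (Fin k → Matrix (a × b) (a × b) ℂ) → Prop)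
    (ρ ω : Matrix (a × b) (a × b) ℂ) (hρ : IsState ρ) (hω : IsState ω) :
    DMeasGen κ Meas ρ ≤ DMeasGen κ Meas ω +
      ENNReal.ofReal ((traceNorm (ρ - ω) / 2) *
        Real.logb 2 (min (Fintype.card a) (Fintype.card b)) +
        gAFW (traceNorm (ρ - ω) / 2)) := by
  classical
  have hΔ : (ρ - ω).IsHermitian := hρ.1.1.sub hω.1.1
  have htn : traceNorm (ρ - ω) = ∑ i, |hΔ.eigenvalues i| := traceNorm_hermitian_eq_sum_abs hΔ
  have hε0 : (0 : ℝ) ≤ traceNorm (ρ - ω) / 2 := by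
    rw [htn]; positivity
  rcases eq_or_lt_of_le hε0 with hε | hε
  · -- `ρ = ω`
    have habs : ∀ i, hΔ.eigenvalues i = 0 := by
      intro i
      have hsum : ∑ j, |hΔ.eigenvalues j| = 0 := by
        rw [← htn]; linarith
      exact abs_eq_zero.mp
        ((Finset.sum_eq_zero_iff_of_nonneg (fun j _ => abs_nonneg _)).mp hsum i
          (Finset.mem_univ i))
    have hρω : ρ = ω := by
      have h0 : ρ - ω = 0 := by
        have h1 : ρ - ω = specFun hΔ (fun x => x) := (specFun_id hΔ).symm
        rw [h1, specFun_congr hΔ (g := fun _ => 0) (fun i => by rw [habs i]), specFun_zero]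
      exact sub_eq_zero.mp h0
    rw [hρω]
    exact le_self_add
  · -- `ε > 0`
    have hne : Nonempty (a × b) := by
      by_contra h
      have hemp : IsEmpty (a × b) := not_nonempty_iff.mp h
      have h0 : ρ.trace = 0 := by
        rw [Matrix.trace]
        simp [Finset.univ_eq_empty]
      rw [hρ.2] at h0
      exact one_ne_zero h0
    have hA : 0 < Fintype.card a := Fintype.card_pos_iff.mpr ⟨(Classical.choice hne).1⟩
    have hB : 0 < Fintype.card b := Fintype.card_pos_iff.mpr ⟨(Classical.choice hne).2⟩
    have hd : (0 : ℝ) < min (Fintype.card a : ℝ) (Fintype.card b : ℝ) :=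
      lt_min (by exact_mod_cast hA) (by exact_mod_cast hB)
    have hsum0 : ∑ i, hΔ.eigenvalues i = 0 := by
      have h1 : (ρ - ω).trace = 0 := by rw [Matrix.trace_sub, hρ.2, hω.2, sub_self]
      rw [trace_hermitian_eq_sum hΔ] at h1
      exact_mod_cast h1
    have hDp : (specFun hΔ (fun x => max x 0)).PosSemidef := posPart_posSemidef hΔ
    have hDptr : (specFun hΔ (fun x => max x 0)).trace = ((traceNorm (ρ - ω) / 2 : ℝ) : ℂ) := by
      rw [specFun_trace]
      congr 1
      have hpt : ∀ x : ℝ, max x 0 = (x + |x|) / 2 := by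
        intro x
        rcases le_total x 0 with h | h
        · rw [max_eq_right h, abs_of_nonpos h]; ring
        · rw [max_eq_left h, abs_of_nonneg h]; ring
      rw [Finset.sum_congr rfl (fun i _ => hpt _), ← Finset.sum_div, Finset.sum_add_distrib,
        hsum0, ← htn, zero_add]
    have hDpSub : ((specFun hΔ (fun x => max x 0)) - (ρ - ω)).PosSemidef := by
      have h1 := posPart_sub_negPart hΔ
      have h2 : (specFun hΔ (fun x => max x 0)) - (ρ - ω) = specFun hΔ (fun x => max (-x) 0) := by
        calc (specFun hΔ (fun x => max x 0)) - (ρ - ω)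
            = (specFun hΔ (fun x => max x 0)) -
              ((specFun hΔ (fun x => max x 0)) - specFun hΔ (fun x => max (-x) 0)) := by
              rw [h1]
          _ = specFun hΔ (fun x => max (-x) 0) := sub_sub_cancel _ _
      rw [h2]
      exact negPart_posSemidef hΔ
    rcases le_total (Fintype.card a) (Fintype.card b) with hab | hab
    · -- pinch on `a`
      have hmin : min (Fintype.card a : ℝ) (Fintype.card b : ℝ) = (Fintype.card a : ℝ) :=
        min_eq_left (by exact_mod_cast hab)
      have hTd : (((min (Fintype.card a : ℝ) (Fintype.card b : ℝ) : ℝ) : ℂ) •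
          pinch Prod.fst (specFun hΔ (fun x => max x 0)) -
            specFun hΔ (fun x => max x 0)).PosSemidef := by
        have h := pinch_dominates (c := (Prod.fst : a × b → a)) hDp
        have hcast : ((min (Fintype.card a : ℝ) (Fintype.card b : ℝ) : ℝ) : ℂ)
            = ((Fintype.card a : ℕ) : ℂ) := by
          rw [hmin]; push_cast; ring
        rw [hcast]
        exact h
      exact key_core κ Meas hρ hω (pinch_posSemidef hDp) hDp hDpSub hTd hDptr
        (by rw [pinch_trace]; exact hDptr) (pinch_fst_inSepCone hDp)
        (ptB_pinch_fst_posSemidef hDp) hε hd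
    · -- pinch on `b`
      have hmin : min (Fintype.card a : ℝ) (Fintype.card b : ℝ) = (Fintype.card b : ℝ) :=
        min_eq_right (by exact_mod_cast hab)
      have hTd : (((min (Fintype.card a : ℝ) (Fintype.card b : ℝ) : ℝ) : ℂ) •
          pinch Prod.snd (specFun hΔ (fun x => max x 0)) -
            specFun hΔ (fun x => max x 0)).PosSemidef := by
        have h := pinch_dominates (c := (Prod.snd : a × b → b)) hDp
        have hcast : ((min (Fintype.card a : ℝ) (Fintype.card b : ℝ) : ℝ) : ℂ)
            = ((Fintype.card b : ℕ) : ℂ) := by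
          rw [hmin]; push_cast; ring
        rw [hcast]
        exact h
      exact key_core κ Meas hρ hω (pinch_posSemidef hDp) hDp hDpSub hTd hDptr
        (by rw [pinch_trace]; exact hDptr) (pinch_snd_inSepCone hDp)
        (by rw [ptB_pinch_snd_eq]; exact pinch_posSemidef hDp) hε hd

end assembly

/-- Asymptotic continuity of the freely measured relative entropy of
entanglement: for a bipartite system of minimum local dimension `d`, states `ρ, ω` at trace
distance `ε`, cone `𝒦 ∈ {SEP, PPT}` and an arbitrary set `𝕂` of measurements,
`|D_𝒦^𝕂(ρ) − D_𝒦^𝕂(ω)| ≤ ε log₂ d + g(ε)` (stated as the two one-sided bounds). -/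
theorem DMeasGen_asymptotically_continuous
    (κ : ConeKind) {a b : Type} [Fintype a] [DecidableEq a] [Fintype b] [DecidableEq b]
    (Meas : ∀ k : ℕ, (Fin k → Matrix (a × b) (a × b) ℂ) → Prop)
    (ρ ω : Matrix (a × b) (a × b) ℂ) (hρ : IsState ρ) (hω : IsState ω)
    (ε : ℝ) (hε : ε = traceNorm (ρ - ω) / 2) :
    DMeasGen κ Meas ρ ≤ DMeasGen κ Meas ω +
      ENNReal.ofReal (ε * Real.logb 2 (min (Fintype.card a) (Fintype.card b)) + gAFW ε) ∧
    DMeasGen κ Meas ω ≤ DMeasGen κ Meas ρ +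
      ENNReal.ofReal (ε * Real.logb 2 (min (Fintype.card a) (Fintype.card b)) + gAFW ε) := by
  constructor
  · rw [hε]
    exact key κ Meas ρ ω hρ hω
  · rw [hε]
    have h1 : traceNorm (ρ - ω) = traceNorm (ω - ρ) := by
      rw [← traceNorm_neg (ω - ρ), neg_sub]
    rw [h1]
    exact key κ Meas ω ρ hω hρ

end QIT
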